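/- Let 0 < L < U, θ = U/L, γ ∈ (1, θ], and define f(γ) = θ / [θ/γ + (θ - 1)(1 - (1/γ)·ln((θ - 1)/(γ - 1)))]. Then f(θ) = 1, and if α ∈ (1, θ) satisfies (α - 1)e^α = θ - 1 (the optimal one-way trading competitive ratio), then f(α) = α. -/

import Mathlib

theorem stmt_10 (L U θ : ℝ) (hL : 0 < L) (hLU : L < U) (hθ : θ = U / L)
    (f : ℝ → ℝ)
    (hf : ∀ γ ∈ Set.Ioc (1:ℝ) θ,
      f γ = θ / (θ / γ + (θ - 1) * (1 - (1 / γ) * Real.log ((θ - 1) / (γ - 1))))) :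
    f θ = 1 ∧
    ∀ α ∈ Set.Ioo (1:ℝ) θ, (α - 1) * Real.exp α = θ - 1 → f α = α := by
  have hθ1 : 1 < θ := by
    rw [hθ]
    exact (one_lt_div hL).2 hLU
  have hθ0 : θ ≠ 0 := by linarith
  constructor
  · rw [hf θ ⟨hθ1, le_refl θ⟩]
    rw [div_self (by linarith : θ - 1 ≠ 0), Real.log_one]
    rw [div_self hθ0]
    field_simp
    have h : θ + (θ - 1) * (θ - 0) = θ ^ 2 := by ring
    rw [h, div_self (pow_ne_zero 2 hθ0)]
  · intro α hα heq
    rw [hf α ⟨hα.1, le_of_lt hα.2⟩]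
    have hα0 : α ≠ 0 := by linarith [hα.1]
    have hlog : Real.log ((θ - 1) / (α - 1)) = α := by
      have : (θ - 1) / (α - 1) = Real.exp α := by
        rw [← heq, mul_comm, mul_div_assoc,
          div_self (by linarith [hα.1] : α - 1 ≠ 0), mul_one]
      rw [this, Real.log_exp]
    rw [hlog]
    rw [one_div, inv_mul_cancel₀ hα0, sub_self, mul_zero, add_zero]
    rw [div_div_eq_mul_div, mul_comm, mul_div_assoc, div_self hθ0, mul_one]
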